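/- Let G be an undirected graph, S ⊆ E(G), and e ∈ S an edge that is a bridge in the graph (V, E \ (S \ {e})). Then a set X ⊆ V intersects all S-cycles of G if and only if X intersects all (S \ {e})-cycles of G. -/

import Mathlib

/-- If `e ∈ S` is a bridge in the graph `(V, E \ (S \ {e}))`, then a vertex set `X`
meets all `S`-cycles of `G` iff it meets all `(S \ {e})`-cycles of `G`. -/
theorem stmt14 {V : Type} [Fintype V] [DecidableEq V] (G : SimpleGraph V)
    (S : Set (Sym2 V)) (hS : S ⊆ G.edgeSet) (e : Sym2 V) (he : e ∈ S)
    (hbridge : (G.deleteEdges (S \ {e})).IsBridge e) :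
    ∀ X : Set V,
      ((∀ (v : V) (c : G.Walk v v), c.IsCycle → (∃ f ∈ c.edges, f ∈ S) →
          ∃ x ∈ X, x ∈ c.support) ↔
       (∀ (v : V) (c : G.Walk v v), c.IsCycle → (∃ f ∈ c.edges, f ∈ S \ {e}) →
          ∃ x ∈ X, x ∈ c.support)) := by
  intro X
  constructor
  · intro h v c hc ⟨f, hf, hfS⟩
    exact h v c hc ⟨f, hf, hfS.1⟩
  · intro h v c hc ⟨f, hf, hfS⟩
    by_cases hex : ∃ g ∈ c.edges, g ∈ S \ {e}
    · exact h v c hc hex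
    · push_neg at hex
      have hsub : ∀ g ∈ c.edges, g ∈ (G.deleteEdges (S \ {e})).edgeSet := by
        intro g hg
        rw [SimpleGraph.edgeSet_deleteEdges]
        exact ⟨c.edges_subset_edgeSet hg, hex g hg⟩
      have hne := hbridge.notMem_edges_of_isCycle
        (p := c.transfer _ hsub) (hc.transfer hsub)
      have hfe : f = e := by
        have := hex f hf
        simp only [Set.mem_diff, Set.mem_singleton_iff] at this
        by_contra hne'
        exact this ⟨hfS, hne'⟩
      apply absurd _ hne
      rw [SimpleGraph.Walk.edges_transfer]
      exact hfe ▸ hf
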